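/- Let e ∈ A_ε be nonzero homogeneous. There is a unique k-algebra homomorphism ℓ_e : A → A_e (the localization of A at powers of e) such that for every α ∈ ℤⁿ and every a ∈ A_α, ℓ_e(a) equals the image of a in A_e multiplied by the ⟨ε,α⟩-th negative power of the image of e (i.e., ℓ_e(a) = a·e^{−⟨ε,α⟩} in A_e). Moreover ℓ_e agrees with the canonical localization map A → A_e on the subalgebra A_{ε^⊥}, and the image of ℓ_e is the k-linear span of the elements a·e^{−n} of A_e with n ∈ ℤ, a ∈ A_α homogeneous and ⟨ε,α⟩ = n. -/

import Mathlib

open DirectSum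

noncomputable section Aux

variable {n : ℕ} {k A : Type*} [Field k] [CommRing A] [IsDomain A] [Algebra k A]
  (𝒜 : (Fin n → ℤ) → Submodule k A) [GradedAlgebra 𝒜]
  (bil : (Fin n → ℤ) →ₗ[ℤ] (Fin n → ℤ) →ₗ[ℤ] ℤ) (ε : Fin n → ℤ) (e : A)

def uE : (Localization.Away e)ˣ :=
  (IsLocalization.map_units (M := Submonoid.powers e) (Localization.Away e)
    ⟨e, Submonoid.mem_powers e⟩).unit

lemma uE_spec : (uE e : Localization.Away e) = algebraMap A (Localization.Away e) e :=
  IsUnit.unit_spec _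

def fpiece (α : Fin n → ℤ) : 𝒜 α →ₗ[k] Localization.Away e :=
  (LinearMap.mulRight k (((uE e) ^ (-(bil ε α)) : (Localization.Away e)ˣ) :
      Localization.Away e)).comp
    ((IsScalarTower.toAlgHom k A (Localization.Away e)).toLinearMap.comp (𝒜 α).subtype)

lemma fpiece_apply (α : Fin n → ℤ) (x : 𝒜 α) :
    fpiece 𝒜 bil ε e α x
      = algebraMap A (Localization.Away e) (x : A)
          * (((uE e) ^ (-(bil ε α)) : (Localization.Away e)ˣ) : Localization.Away e) := rfl

def ellBase : (⨁ i, 𝒜 i) →ₐ[k] Localization.Away e :=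
  DirectSum.toAlgebra k _ (fpiece 𝒜 bil ε e)
    (by
      rw [fpiece_apply, SetLike.coe_gOne, map_one, map_zero, neg_zero, zpow_zero, one_mul,
        Units.val_one])
    (by
      intro i j ai aj
      rw [fpiece_apply, fpiece_apply, fpiece_apply, SetLike.coe_gMul, map_mul, map_add, neg_add,
        zpow_add, Units.val_mul]
      ring)

def ellAux : A →ₐ[k] Localization.Away e :=
  (ellBase 𝒜 bil ε e).comp (DirectSum.decomposeAlgEquiv 𝒜).toAlgHom

lemma ellAux_homog {α : Fin n → ℤ} {a : A} (ha : a ∈ 𝒜 α) :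
    ellAux 𝒜 bil ε e a
      = algebraMap A (Localization.Away e) a
          * (((uE e) ^ (-(bil ε α)) : (Localization.Away e)ˣ) : Localization.Away e) := by
  have : ellAux 𝒜 bil ε e a = ellBase 𝒜 bil ε e (DirectSum.of (fun i => ↥(𝒜 i)) α ⟨a, ha⟩) := by
    simp only [ellAux, AlgHom.comp_apply, AlgEquiv.toAlgHom_eq_coe, AlgHom.coe_coe,
      DirectSum.decomposeAlgEquiv_apply, DirectSum.decompose_of_mem 𝒜 ha]
    congr 1
    exact DirectSum.decompose_of_mem 𝒜 ha
  rw [this]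
  unfold ellBase
  rw [DirectSum.toAlgebra_apply]
  refine (DirectSum.toSemiring_of _ _ _ _ _).trans ?_
  rfl

lemma ellAux_key (α : Fin n → ℤ) (a : A) (ha : a ∈ 𝒜 α) :
    ellAux 𝒜 bil ε e a * (algebraMap A (Localization.Away e) e) ^ (bil ε α).toNat
      = algebraMap A (Localization.Away e) a
          * (algebraMap A (Localization.Away e) e) ^ (-(bil ε α)).toNat := by
  rw [ellAux_homog 𝒜 bil ε e ha, ← uE_spec, ← Units.val_pow_eq_pow_val, ← Units.val_pow_eq_pow_val,
    mul_assoc, ← Units.val_mul, ← zpow_natCast (uE e) (bil ε α).toNat,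
    ← zpow_natCast (uE e) (-(bil ε α)).toNat, ← zpow_add]
  have hexp : -(bil ε α) + ((bil ε α).toNat : ℤ) = ((-(bil ε α)).toNat : ℤ) := by omega
  rw [hexp]

end Aux

theorem stmt4 {n : ℕ} {k A : Type*} [Field k] [CommRing A] [IsDomain A] [Algebra k A]
    (𝒜 : (Fin n → ℤ) → Submodule k A) [GradedAlgebra 𝒜]
    (bil : (Fin n → ℤ) →ₗ[ℤ] (Fin n → ℤ) →ₗ[ℤ] ℤ)
    (ε : Fin n → ℤ)
    (e : A) (he0 : e ≠ 0) (he : e ∈ 𝒜 ε) :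
    ∃ ℓ : A →ₐ[k] Localization.Away e,
      ((∀ (α : Fin n → ℤ) (a : A), a ∈ 𝒜 α →
          ℓ a * (algebraMap A (Localization.Away e) e) ^ (bil ε α).toNat
            = algebraMap A (Localization.Away e) a
              * (algebraMap A (Localization.Away e) e) ^ (-(bil ε α)).toNat)
        ∧ (∀ a ∈ (⨆ γ ∈ {γ : Fin n → ℤ | bil ε γ = 0}, 𝒜 γ),
            ℓ a = algebraMap A (Localization.Away e) a)
        ∧ Set.range ⇑ℓ = (Submodule.span k {x : Localization.Away e |
            ∃ (α : Fin n → ℤ) (a : A), a ∈ 𝒜 α ∧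
              x * (algebraMap A (Localization.Away e) e) ^ (bil ε α).toNat
                = algebraMap A (Localization.Away e) a
                  * (algebraMap A (Localization.Away e) e) ^ (-(bil ε α)).toNat} : Set _))
      ∧ ∀ ℓ' : A →ₐ[k] Localization.Away e,
          (∀ (α : Fin n → ℤ) (a : A), a ∈ 𝒜 α →
            ℓ' a * (algebraMap A (Localization.Away e) e) ^ (bil ε α).toNat
              = algebraMap A (Localization.Away e) a
                * (algebraMap A (Localization.Away e) e) ^ (-(bil ε α)).toNat) → ℓ' = ℓ := by
  classical
  set Loc := Localization.Away e
  set ℓ := ellAux 𝒜 bil ε e with hℓ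
  have key := ellAux_key 𝒜 bil ε e
  have hunit : ∀ m : ℕ, IsUnit ((algebraMap A Loc e) ^ m) := fun m => by
    rw [← uE_spec]
    exact ((uE e).isUnit).pow m
  refine ⟨ℓ, ⟨key, ?_, ?_⟩, ?_⟩
  · -- agreement on A_{ε^⊥}
    intro a ha
    have hle : (⨆ γ ∈ {γ : Fin n → ℤ | bil ε γ = 0}, 𝒜 γ)
        ≤ LinearMap.eqLocus ℓ.toLinearMap (IsScalarTower.toAlgHom k A Loc).toLinearMap := by
      refine iSup₂_le fun γ hγ x hx => ?_
      show ℓ x = algebraMap A Loc x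
      rw [hℓ, ellAux_homog 𝒜 bil ε e hx, hγ, neg_zero, zpow_zero, Units.val_one, mul_one]
    exact hle ha
  · -- range description
    apply subset_antisymm
    · rintro x ⟨a, rfl⟩
      have : ℓ a = ∑ i ∈ (DirectSum.decompose 𝒜 a).support, ℓ (DirectSum.decompose 𝒜 a i) := by
        conv_lhs => rw [← DirectSum.sum_support_decompose 𝒜 a]
        rw [map_sum]
      rw [this]
      refine Submodule.sum_mem _ fun i _ => Submodule.subset_span ?_
      exact ⟨i, DirectSum.decompose 𝒜 a i, SetLike.coe_mem _,
        key i _ (SetLike.coe_mem _)⟩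
    · have hsub : {x : Loc |
          ∃ (α : Fin n → ℤ) (a : A), a ∈ 𝒜 α ∧
            x * (algebraMap A Loc e) ^ (bil ε α).toNat
              = algebraMap A Loc a * (algebraMap A Loc e) ^ (-(bil ε α)).toNat}
          ⊆ (Subalgebra.toSubmodule ℓ.range : Set Loc) := by
        rintro x ⟨α, a, ha, hx⟩
        have : x = ℓ a :=
          (hunit (bil ε α).toNat).mul_right_cancel (hx.trans (key α a ha).symm)
        exact this ▸ ⟨a, rfl⟩
      have := Submodule.span_le.mpr hsub
      intro x hx
      exact this hx
  · -- uniqueness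
    intro ℓ' hℓ'
    ext a
    have hsame : ∀ (α : Fin n → ℤ) (x : A), x ∈ 𝒜 α → ℓ' x = ℓ x := fun α x hx =>
      (hunit (bil ε α).toNat).mul_right_cancel ((hℓ' α x hx).trans (key α x hx).symm)
    conv_lhs => rw [← DirectSum.sum_support_decompose 𝒜 a]
    conv_rhs => rw [← DirectSum.sum_support_decompose 𝒜 a]
    rw [map_sum, map_sum]
    exact Finset.sum_congr rfl fun i _ => hsame i _ (SetLike.coe_mem _)
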